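/- With K, h, w_j as above, inf_{t∈[0,1]} w₀(t) = 1/2 and inf_{t∈[0,1]} (w₀(t)w₂(t) - w₁(t)²) = (1/4)(κ₂ - κ₁²)h², where κ_j = ∫_{-1}^1 |u|^j K(u) du. -/

import Mathlib

open MeasureTheory

theorem stmt_4 (K : ℝ → ℝ) (L : ℝ) (hL : 1 ≤ L)
    (hKlip : ∀ x y, |K x - K y| ≤ L * |x - y|)
    (hKnonneg : ∀ t, 0 ≤ K t)
    (hKsym : ∀ t, K t = K (-t))
    (hKsupp : ∀ t, t ∉ Set.Icc (-1 : ℝ) 1 → K t = 0)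
    (hKint : ∫ t in Set.Icc (-1 : ℝ) 1, K t = 1)
    (hK1 : K 1 = 0) (hKm1 : K (-1) = 0)
    (h : ℝ) (hh : h ∈ Set.Ioo (0 : ℝ) (1 / 2)) :
    let w : ℕ → ℝ → ℝ := fun j t => ∫ z in Set.Icc (0 : ℝ) 1, (t - z) ^ j * (K ((t - z) / h) / h)
    let κ : ℕ → ℝ := fun j => ∫ u in Set.Icc (-1 : ℝ) 1, |u| ^ j * K u
    IsLeast ((fun t => w 0 t) '' Set.Icc (0 : ℝ) 1) (1 / 2) ∧
    IsLeast ((fun t => w 0 t * w 2 t - (w 1 t) ^ 2) '' Set.Icc (0 : ℝ) 1)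
      ((1 / 4) * (κ 2 - (κ 1) ^ 2) * h ^ 2) := by
  intro w κ
  obtain ⟨hh0, hh2⟩ := hh
  have hne : h ≠ 0 := ne_of_gt hh0
  have hL0 : (0:ℝ) ≤ L := le_trans zero_le_one hL
  -- continuity of K
  have hKcont : Continuous K := by
    have : LipschitzWith ⟨L, hL0⟩ K := by
      apply LipschitzWith.of_dist_le_mul
      intro x y
      show dist (K x) (K y) ≤ L * dist x y
      simpa [Real.dist_eq] using hKlip x y
    exact this.continuous
  -- vanishing outside [-1,1]
  have hKzL : ∀ u : ℝ, u ≤ -1 → K u = 0 := by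
    intro u hu
    rcases eq_or_lt_of_le hu with h' | h'
    · rw [h']; exact hKm1
    · exact hKsupp u (by simp only [Set.mem_Icc, not_and_or, not_le]; left; exact h')
  have hKzR : ∀ u : ℝ, 1 ≤ u → K u = 0 := by
    intro u hu
    rcases eq_or_lt_of_le hu with h' | h'
    · rw [← h']; exact hK1
    · exact hKsupp u (by simp only [Set.mem_Icc, not_and_or, not_le]; right; exact h')
  -- integrability
  have hInt : ∀ (j : ℕ) (a b : ℝ), IntervalIntegrable (fun u => u ^ j * K u) volume a b :=
    fun j a b => ((continuous_pow j).mul hKcont).intervalIntegrable a b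
  -- change of variables
  have wEq : ∀ (j : ℕ) (t : ℝ), w j t = h ^ j * ∫ u in (t-1)/h..t/h, u ^ j * K u := by
    intro j t
    have e1 : w j t = ∫ z in (0:ℝ)..1, (fun x => x ^ j * (K (x / h) / h)) (t - z) := by
      show (∫ z in Set.Icc (0:ℝ) 1, (t - z) ^ j * (K ((t - z) / h) / h)) = _
      rw [MeasureTheory.integral_Icc_eq_integral_Ioc, ← intervalIntegral.integral_of_le zero_le_one]
    rw [e1, intervalIntegral.integral_comp_sub_left (fun x => x ^ j * (K (x / h) / h)) t]
    have e3 : (fun x : ℝ => x ^ j * (K (x / h) / h)) = fun x => (fun u => (h * u) ^ j * (K u / h)) (x / h) := by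
      funext x
      simp only
      rw [mul_div_cancel₀ _ hne]
    rw [e3, sub_zero, intervalIntegral.integral_comp_div (a := t-1) (b := t) (fun u => (h * u) ^ j * (K u / h)) hne]
    have e4 : (fun u : ℝ => (h * u) ^ j * (K u / h)) = fun u => (h ^ j / h) * (u ^ j * K u) := by
      funext u; rw [mul_pow]; ring
    rw [e4, intervalIntegral.integral_const_mul, smul_eq_mul]
    field_simp
  -- truncation
  have truncL : ∀ (j : ℕ) (a c : ℝ), a ≤ -1 →
      (∫ u in a..c, u ^ j * K u) = ∫ u in (-1:ℝ)..c, u ^ j * K u := by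
    intro j a c ha
    rw [← intervalIntegral.integral_add_adjacent_intervals (hInt j a (-1)) (hInt j (-1) c)]
    have hz : (∫ u in a..(-1:ℝ), u ^ j * K u) = 0 := by
      rw [intervalIntegral.integral_congr (g := fun _ => (0:ℝ))]
      · simp
      · intro u hu
        rw [Set.uIcc_of_le ha] at hu
        simp only
        rw [hKzL u hu.2, mul_zero]
    rw [hz, zero_add]
  have truncR : ∀ (j : ℕ) (c b : ℝ), 1 ≤ b →
      (∫ u in c..b, u ^ j * K u) = ∫ u in c..(1:ℝ), u ^ j * K u := by
    intro j c b hb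
    rw [← intervalIntegral.integral_add_adjacent_intervals (hInt j c 1) (hInt j 1 b)]
    have hz : (∫ u in (1:ℝ)..b, u ^ j * K u) = 0 := by
      rw [intervalIntegral.integral_congr (g := fun _ => (0:ℝ))]
      · simp
      · intro u hu
        rw [Set.uIcc_of_le hb] at hu
        simp only
        rw [hKzR u hu.1, mul_zero]
    rw [hz, add_zero]
  -- symmetry
  have symmJ : ∀ (j : ℕ) (b : ℝ),
      (∫ u in (-b)..(0:ℝ), u ^ j * K u) = (-1:ℝ) ^ j * ∫ u in (0:ℝ)..b, u ^ j * K u := by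
    intro j b
    have e : (fun x : ℝ => (-1:ℝ) ^ j * (x ^ j * K x)) = fun x => (fun u => u ^ j * K u) (-x) := by
      funext x
      simp only
      rw [← (hKsym x), neg_pow]
      ring
    rw [← intervalIntegral.integral_const_mul, e, intervalIntegral.integral_comp_neg (a := (0:ℝ)) (b := b) (fun u => u ^ j * K u), neg_zero]
  -- κ values
  have kappaEq : ∀ j : ℕ, κ j = 2 * ∫ u in (0:ℝ)..1, u ^ j * K u := by
    intro j
    have hIntAbs : ∀ a b : ℝ, IntervalIntegrable (fun u => |u| ^ j * K u) volume a b :=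
      fun a b => ((continuous_abs.pow j).mul hKcont).intervalIntegrable a b
    have e1 : κ j = ∫ u in (-1:ℝ)..1, |u| ^ j * K u := by
      show (∫ u in Set.Icc (-1:ℝ) 1, |u| ^ j * K u) = _
      rw [MeasureTheory.integral_Icc_eq_integral_Ioc,
        ← intervalIntegral.integral_of_le (by norm_num : (-1:ℝ) ≤ 1)]
    have e2 : (∫ u in (-1:ℝ)..0, |u| ^ j * K u) = ∫ u in (0:ℝ)..1, |u| ^ j * K u := by
      have e : (fun x : ℝ => |x| ^ j * K x) = fun x => (fun u => |u| ^ j * K u) (-x) := by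
        funext x; simp only [abs_neg]; rw [← (hKsym x)]
      nth_rewrite 2 [e]
      rw [intervalIntegral.integral_comp_neg (a := (0:ℝ)) (b := (1:ℝ)) (fun u => |u| ^ j * K u), neg_zero]
    have e3 : (∫ u in (0:ℝ)..1, |u| ^ j * K u) = ∫ u in (0:ℝ)..1, u ^ j * K u := by
      apply intervalIntegral.integral_congr
      intro u hu
      rw [Set.uIcc_of_le (by norm_num : (0:ℝ) ≤ 1)] at hu
      simp only
      rw [abs_of_nonneg hu.1]
    rw [e1, ← intervalIntegral.integral_add_adjacent_intervals (hIntAbs (-1) 0) (hIntAbs 0 1),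
      e2, e3]
    ring
  clear_value w κ
  -- split over [-1,1]
  have hIval : ∀ j : ℕ, (∫ u in (-1:ℝ)..1, u ^ j * K u)
      = ((-1:ℝ) ^ j + 1) * ∫ u in (0:ℝ)..1, u ^ j * K u := by
    intro j
    rw [← intervalIntegral.integral_add_adjacent_intervals (hInt j (-1) 0) (hInt j 0 1), symmJ j 1]
    ring
  have h1 : (∫ u in (-1:ℝ)..1, u ^ 0 * K u) = 1 := by
    simp only [pow_zero, one_mul]
    rw [intervalIntegral.integral_of_le (by norm_num : (-1:ℝ) ≤ 1),
      ← MeasureTheory.integral_Icc_eq_integral_Ioc]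
    exact hKint
  have hI0eq : (∫ u in (0:ℝ)..1, u ^ 0 * K u) = 1/2 := by
    have h2 := hIval 0
    rw [h1, pow_zero] at h2
    linarith
  have hI1eq : (∫ u in (0:ℝ)..1, u ^ 1 * K u) = κ 1 / 2 := by
    have := kappaEq 1; linarith
  have hI2eq : (∫ u in (0:ℝ)..1, u ^ 2 * K u) = κ 2 / 2 := by
    have := kappaEq 2; linarith
  have hIpos : ∀ (j : ℕ) (a b : ℝ), 0 ≤ a → a ≤ b → 0 ≤ ∫ u in a..b, u ^ j * K u :=
    fun j a b ha hab => intervalIntegral.integral_nonneg hab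
      (fun u hu => mul_nonneg (pow_nonneg (le_trans ha hu.1) j) (hKnonneg u))
  have hk1 : 0 ≤ κ 1 := by
    have := hIpos 1 0 1 le_rfl zero_le_one
    rw [hI1eq] at this; linarith
  have hk2 : 0 ≤ κ 2 := by
    have := hIpos 2 0 1 le_rfl zero_le_one
    rw [hI2eq] at this; linarith
  -- values at 0
  have hw0 : ∀ j : ℕ, w j 0 = h ^ j * ((-1:ℝ) ^ j * ∫ u in (0:ℝ)..1, u ^ j * K u) := by
    intro j
    have hA : ((0:ℝ)-1)/h ≤ -1 := by rw [div_le_iff₀ hh0]; linarith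
    rw [wEq, zero_div, truncL j _ _ hA, symmJ j 1]
  -- part 1 lower bound
  have lb1 : ∀ t ∈ Set.Icc (0:ℝ) 1, 1/2 ≤ w 0 t := by
    intro t ht
    rw [wEq]
    have hKae : 0 ≤ᵐ[volume.restrict (Set.Ioc ((t-1)/h) (t/h))] (fun u : ℝ => u ^ 0 * K u) :=
      Filter.Eventually.of_forall (fun u => by simpa using hKnonneg u)
    rcases le_or_gt t (1/2) with hc | hc
    · have hm := intervalIntegral.integral_mono_interval (a := (-1:ℝ)) (b := 0)
        (show (t-1)/h ≤ -1 by rw [div_le_iff₀ hh0]; linarith)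
        (by norm_num) (div_nonneg ht.1 hh0.le) hKae (hInt 0 _ _)
      have hv : (∫ u in (-1:ℝ)..0, u ^ 0 * K u) = 1/2 := by
        rw [symmJ 0 1, hI0eq]; norm_num
      rw [hv] at hm
      rw [pow_zero, one_mul]
      exact hm
    · have hm := intervalIntegral.integral_mono_interval (a := (0:ℝ)) (b := 1)
        (show (t-1)/h ≤ 0 from div_nonpos_of_nonpos_of_nonneg (by linarith [ht.2]) hh0.le)
        zero_le_one
        (show (1:ℝ) ≤ t/h by rw [le_div_iff₀ hh0]; linarith)
        hKae (hInt 0 _ _)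
      rw [hI0eq] at hm
      rw [pow_zero, one_mul]
      exact hm
  -- key lower bound for the determinant when t ≤ 1 - h
  have key : ∀ t : ℝ, 0 ≤ t → t ≤ 1 - h →
      (1/4) * (κ 2 - κ 1 ^ 2) * h ^ 2 ≤ w 0 t * w 2 t - w 1 t ^ 2 := by
    intro t ht0 ht1
    have hA : (t-1)/h ≤ -1 := by rw [div_le_iff₀ hh0]; linarith
    have ha0 : 0 ≤ t / h := div_nonneg ht0 hh0.le
    have ew : ∀ j : ℕ, w j t = h ^ j * ∫ u in (-1:ℝ)..(t/h), u ^ j * K u := by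
      intro j; rw [wEq, truncL j _ _ hA]
    rcases le_or_gt 1 (t/h) with hc | hc
    · have eA : ∀ j : ℕ, (∫ u in (-1:ℝ)..(t/h), u ^ j * K u)
          = ((-1:ℝ) ^ j + 1) * ∫ u in (0:ℝ)..1, u ^ j * K u := by
        intro j; rw [truncR j _ _ hc, hIval j]
      rw [ew 0, ew 1, ew 2, eA 0, eA 1, eA 2, hI0eq, hI1eq, hI2eq]
      have e0 : (0:ℝ) ≤ κ 2 * h ^ 2 := mul_nonneg hk2 (sq_nonneg h)
      have e1 : (0:ℝ) ≤ κ 1 ^ 2 * h ^ 2 := mul_nonneg (sq_nonneg _) (sq_nonneg h)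
      nlinarith [e0, e1]
    · have hsplitA : ∀ j : ℕ, (∫ u in (-1:ℝ)..(t/h), u ^ j * K u)
          = (-1:ℝ) ^ j * (∫ u in (0:ℝ)..1, u ^ j * K u) + ∫ u in (0:ℝ)..(t/h), u ^ j * K u := by
        intro j
        rw [← intervalIntegral.integral_add_adjacent_intervals (hInt j (-1) 0) (hInt j 0 (t/h)),
          symmJ j 1]
      set G0 := ∫ u in (0:ℝ)..(t/h), u ^ 0 * K u with hG0def
      set G1 := ∫ u in (0:ℝ)..(t/h), u ^ 1 * K u with hG1def
      set G2 := ∫ u in (0:ℝ)..(t/h), u ^ 2 * K u with hG2def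
      have hG0 : 0 ≤ G0 := hIpos 0 0 (t/h) le_rfl ha0
      have hG1 : 0 ≤ G1 := hIpos 1 0 (t/h) le_rfl ha0
      have hG2 : 0 ≤ G2 := hIpos 2 0 (t/h) le_rfl ha0
      have expand : ∀ lam : ℝ, (∫ u in (0:ℝ)..(t/h), (lam - u) ^ 2 * K u)
          = G0 * (lam * lam) + (-2 * G1) * lam + G2 := by
        intro lam
        have e : (fun u : ℝ => (lam - u) ^ 2 * K u)
            = fun u => (lam * lam) * (u ^ 0 * K u) + ((-2 * lam) * (u ^ 1 * K u) + u ^ 2 * K u) := by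
          funext u; ring
        rw [e, intervalIntegral.integral_add ((hInt 0 0 (t/h)).const_mul _)
            (((hInt 1 0 (t/h)).const_mul _).add (hInt 2 0 (t/h))),
          intervalIntegral.integral_add ((hInt 1 0 (t/h)).const_mul _) (hInt 2 0 (t/h)),
          intervalIntegral.integral_const_mul, intervalIntegral.integral_const_mul]
        rw [hG0def, hG1def, hG2def]
        ring
      have quadpos : ∀ lam : ℝ, 0 ≤ G0 * (lam * lam) + (-2 * G1) * lam + G2 := by
        intro lam
        rw [← expand lam]
        exact intervalIntegral.integral_nonneg ha0
          (fun u _ => mul_nonneg (sq_nonneg _) (hKnonneg u))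
      have hdisc := discrim_le_zero quadpos
      simp only [discrim] at hdisc
      have cs : G1 ^ 2 ≤ G0 * G2 := by nlinarith [hdisc]
      rw [ew 0, ew 1, ew 2, hsplitA 0, hsplitA 1, hsplitA 2, hI0eq, hI1eq, hI2eq,
        ← hG0def, ← hG1def, ← hG2def]
      clear hdisc quadpos expand hsplitA hG0def hG1def hG2def
      clear_value G0 G1 G2
      have S : (1/4) * (κ 2 - κ 1 ^ 2)
          ≤ ((-1:ℝ) ^ 0 * (1/2) + G0) * ((-1:ℝ) ^ 2 * (κ 2 / 2) + G2)
            - ((-1:ℝ) ^ 1 * (κ 1 / 2) + G1) ^ 2 := by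
        nlinarith [cs, hG0, hG1, hG2, hk1, hk2, mul_nonneg hG0 hk2, mul_nonneg hk1 hG1,
          mul_nonneg hG0 hG2]
      calc 1/4 * (κ 2 - κ 1 ^ 2) * h ^ 2
          = h ^ 2 * (1/4 * (κ 2 - κ 1 ^ 2)) := by ring
        _ ≤ h ^ 2 * (((-1:ℝ) ^ 0 * (1/2) + G0) * ((-1:ℝ) ^ 2 * (κ 2 / 2) + G2)
              - ((-1:ℝ) ^ 1 * (κ 1 / 2) + G1) ^ 2) := mul_le_mul_of_nonneg_left S (sq_nonneg h)
        _ = (h ^ 0 * ((-1:ℝ) ^ 0 * (1/2) + G0)) * (h ^ 2 * ((-1:ℝ) ^ 2 * (κ 2 / 2) + G2))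
              - (h ^ 1 * ((-1:ℝ) ^ 1 * (κ 1 / 2) + G1)) ^ 2 := by ring
  -- symmetry t ↦ 1 - t
  have wsym : ∀ (j : ℕ) (t : ℝ), w j (1 - t) = (-1:ℝ) ^ j * w j t := by
    intro j t
    rw [wEq, wEq]
    have hflip : (∫ u in ((1-t)-1)/h..(1-t)/h, u ^ j * K u)
        = (-1:ℝ) ^ j * ∫ u in (t-1)/h..t/h, u ^ j * K u := by
      have b1 : ((1-t)-1)/h = -(t/h) := by ring
      have b2 : (1-t)/h = -((t-1)/h) := by ring
      have e : (fun x : ℝ => (-1:ℝ) ^ j * (x ^ j * K x)) = fun x => (fun u => u ^ j * K u) (-x) := by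
        funext x
        simp only
        rw [← (hKsym x), neg_pow]
        ring
      rw [b1, b2, ← intervalIntegral.integral_const_mul, e,
        intervalIntegral.integral_comp_neg (a := (t-1)/h) (b := t/h) (fun u => u ^ j * K u)]
    rw [hflip]
    ring
  -- lower bound for the determinant on all of [0,1]
  have lb2 : ∀ t ∈ Set.Icc (0:ℝ) 1,
      (1/4) * (κ 2 - κ 1 ^ 2) * h ^ 2 ≤ w 0 t * w 2 t - w 1 t ^ 2 := by
    intro t ht
    rcases le_or_gt t (1 - h) with hc | hc
    · exact key t ht.1 hc
    · have hkey := key (1 - t) (by linarith [ht.2]) (by linarith)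
      have e0 : w 0 t = w 0 (1 - t) := by
        have := wsym 0 (1 - t); rw [sub_sub_cancel] at this
        simpa using this
      have e2 : w 2 t = w 2 (1 - t) := by
        have := wsym 2 (1 - t); rw [sub_sub_cancel] at this
        simpa using this
      have e1 : w 1 t ^ 2 = w 1 (1 - t) ^ 2 := by
        have := wsym 1 (1 - t); rw [sub_sub_cancel] at this
        rw [this]; ring
      rw [e0, e2, e1]
      exact hkey
  constructor
  · constructor
    · exact ⟨0, ⟨le_rfl, zero_le_one⟩, by
        simp only
        rw [hw0 0, hI0eq]
        norm_num⟩
    · rintro x ⟨t, ht, rfl⟩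
      exact lb1 t ht
  · constructor
    · refine ⟨0, ⟨le_rfl, zero_le_one⟩, ?_⟩
      simp only
      rw [hw0 0, hw0 1, hw0 2, hI0eq, hI1eq, hI2eq]
      ring
    · rintro x ⟨t, ht, rfl⟩
      exact lb2 t ht
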